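/- The Faran map H₃(z₁,z₂) = (z₁³, √3 z₁z₂, z₂³) maps M into M' and is 3-nondegenerate at p = (1,0): with v = ρ'_{Z'}∘(H₃, H̄₃) = (z̄₁³, √3 z̄₁z̄₂, z̄₂³), the spaces E_k(p) = span_ℂ{v(p), (Lv)(p), …, (L^k v)(p)} satisfy E₃(p) = ℂ³ and E₂(p) ≠ ℂ³. -/

import Mathlib

open Complex Topology

noncomputable section

/-- The Wirtinger derivative `∂/∂z̄₁` of a function on `ℂ²`. -/
def dzb1 (f : ℂ × ℂ → ℂ) (p : ℂ × ℂ) : ℂ :=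
  (1 / 2 : ℂ) * (fderiv ℝ f p (1, 0) + Complex.I * fderiv ℝ f p (Complex.I, 0))

/-- The Wirtinger derivative `∂/∂z̄₂` of a function on `ℂ²`. -/
def dzb2 (f : ℂ × ℂ → ℂ) (p : ℂ × ℂ) : ℂ :=
  (1 / 2 : ℂ) * (fderiv ℝ f p (0, 1) + Complex.I * fderiv ℝ f p (0, Complex.I))

/-- The CR vector field `L = z₂ ∂/∂z̄₁ − z₁ ∂/∂z̄₂` tangent to the unit sphere in `ℂ²`. -/
def Lsph (f : ℂ × ℂ → ℂ) (p : ℂ × ℂ) : ℂ :=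
  p.2 * dzb1 f p - p.1 * dzb2 f p

/-- `L` acting componentwise on `ℂ³`-valued functions. -/
def LsphV (v : ℂ × ℂ → ℂ × ℂ × ℂ) (p : ℂ × ℂ) : ℂ × ℂ × ℂ :=
  (Lsph (fun q => (v q).1) p, Lsph (fun q => (v q).2.1) p, Lsph (fun q => (v q).2.2) p)

/-- The defining function `ρ' = |z₁'|² + |z₂'|² + |z₃'|² − 1` of the unit sphere in `ℂ³`. -/
def rhoSph (Z : ℂ × ℂ × ℂ) : ℝ :=
  Complex.normSq Z.1 + Complex.normSq Z.2.1 + Complex.normSq Z.2.2 - 1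

/-- The Wirtinger (complex) gradient of a real-valued function on `ℂ³`. -/
def gradSph (r : ℂ × ℂ × ℂ → ℝ) (Z : ℂ × ℂ × ℂ) : ℂ × ℂ × ℂ :=
  ((1 / 2 : ℂ) * ((fderiv ℝ r Z (1, 0, 0) : ℂ) -
      Complex.I * (fderiv ℝ r Z (Complex.I, 0, 0) : ℂ)),
    (1 / 2 : ℂ) * ((fderiv ℝ r Z (0, 1, 0) : ℂ) -
      Complex.I * (fderiv ℝ r Z (0, Complex.I, 0) : ℂ)),
    (1 / 2 : ℂ) * ((fderiv ℝ r Z (0, 0, 1) : ℂ) -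
      Complex.I * (fderiv ℝ r Z (0, 0, Complex.I) : ℂ)))

/-- Faran's third map `H₃(z₁,z₂) = (z₁³, √3 z₁z₂, z₂³)` of the 2-ball into the 3-ball. -/
def Hfaran (p : ℂ × ℂ) : ℂ × ℂ × ℂ :=
  (p.1 ^ 3, ((Real.sqrt 3 : ℝ) : ℂ) * p.1 * p.2, p.2 ^ 3)

/-- `v = ρ'_{Z'}∘(H₃,H̄₃) = (z̄₁³, √3 z̄₁z̄₂, z̄₂³)`. -/
def vFaran (p : ℂ × ℂ) : ℂ × ℂ × ℂ :=
  (((starRingEnd ℂ) p.1) ^ 3,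
    ((Real.sqrt 3 : ℝ) : ℂ) * (starRingEnd ℂ) p.1 * (starRingEnd ℂ) p.2,
    ((starRingEnd ℂ) p.2) ^ 3)

lemma hasFD_c1 (p : ℂ × ℂ) : HasFDerivAt (fun q : ℂ × ℂ => (starRingEnd ℂ) q.1)
    ((Complex.conjCLE.toContinuousLinearMap).comp (ContinuousLinearMap.fst ℝ ℂ ℂ)) p :=
  (Complex.conjCLE.toContinuousLinearMap.hasFDerivAt).comp p hasFDerivAt_fst
lemma hasFD_c2 (p : ℂ × ℂ) : HasFDerivAt (fun q : ℂ × ℂ => (starRingEnd ℂ) q.2)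
    ((Complex.conjCLE.toContinuousLinearMap).comp (ContinuousLinearMap.snd ℝ ℂ ℂ)) p :=
  (Complex.conjCLE.toContinuousLinearMap.hasFDerivAt).comp p hasFDerivAt_snd

lemma diffAt_z1 (p : ℂ × ℂ) : DifferentiableAt ℝ (fun q : ℂ × ℂ => q.1) p := differentiableAt_fst
lemma diffAt_z2 (p : ℂ × ℂ) : DifferentiableAt ℝ (fun q : ℂ × ℂ => q.2) p := differentiableAt_snd
lemma diffAt_c1 (p : ℂ × ℂ) : DifferentiableAt ℝ (fun q : ℂ × ℂ => (starRingEnd ℂ) q.1) p :=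
  (hasFD_c1 p).differentiableAt
lemma diffAt_c2 (p : ℂ × ℂ) : DifferentiableAt ℝ (fun q : ℂ × ℂ => (starRingEnd ℂ) q.2) p :=
  (hasFD_c2 p).differentiableAt

lemma dzb1_c1 (p : ℂ × ℂ) : dzb1 (fun q => (starRingEnd ℂ) q.1) p = 1 := by
  unfold dzb1; rw [(hasFD_c1 p).fderiv]; simp; norm_num
lemma dzb1_c2 (p : ℂ × ℂ) : dzb1 (fun q => (starRingEnd ℂ) q.2) p = 0 := by
  unfold dzb1; rw [(hasFD_c2 p).fderiv]; simp
lemma dzb2_c1 (p : ℂ × ℂ) : dzb2 (fun q => (starRingEnd ℂ) q.1) p = 0 := by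
  unfold dzb2; rw [(hasFD_c1 p).fderiv]; simp
lemma dzb2_c2 (p : ℂ × ℂ) : dzb2 (fun q => (starRingEnd ℂ) q.2) p = 1 := by
  unfold dzb2; rw [(hasFD_c2 p).fderiv]; simp; norm_num
lemma dzb1_z1 (p : ℂ × ℂ) : dzb1 (fun q => q.1) p = 0 := by
  unfold dzb1; rw [hasFDerivAt_fst.fderiv]; simp [Complex.I_mul_I]
lemma dzb1_z2 (p : ℂ × ℂ) : dzb1 (fun q => q.2) p = 0 := by
  unfold dzb1; rw [hasFDerivAt_snd.fderiv]; simp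
lemma dzb2_z1 (p : ℂ × ℂ) : dzb2 (fun q => q.1) p = 0 := by
  unfold dzb2; rw [hasFDerivAt_fst.fderiv]; simp
lemma dzb2_z2 (p : ℂ × ℂ) : dzb2 (fun q => q.2) p = 0 := by
  unfold dzb2; rw [hasFDerivAt_snd.fderiv]; simp [Complex.I_mul_I]
lemma dzb1_const (c : ℂ) (p : ℂ × ℂ) : dzb1 (fun _ => c) p = 0 := by
  unfold dzb1; rw [fderiv_fun_const]; simp
lemma dzb2_const (c : ℂ) (p : ℂ × ℂ) : dzb2 (fun _ => c) p = 0 := by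
  unfold dzb2; rw [fderiv_fun_const]; simp

variable {f g : ℂ × ℂ → ℂ} {p : ℂ × ℂ}

lemma dzb1_mul (hf : DifferentiableAt ℝ f p) (hg : DifferentiableAt ℝ g p) :
    dzb1 (fun q => f q * g q) p = f p * dzb1 g p + g p * dzb1 f p := by
  unfold dzb1; rw [fderiv_fun_mul hf hg]; simp; ring
lemma dzb2_mul (hf : DifferentiableAt ℝ f p) (hg : DifferentiableAt ℝ g p) :
    dzb2 (fun q => f q * g q) p = f p * dzb2 g p + g p * dzb2 f p := by
  unfold dzb2; rw [fderiv_fun_mul hf hg]; simp; ring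
lemma dzb1_sub (hf : DifferentiableAt ℝ f p) (hg : DifferentiableAt ℝ g p) :
    dzb1 (fun q => f q - g q) p = dzb1 f p - dzb1 g p := by
  unfold dzb1; rw [fderiv_fun_sub hf hg]; simp; ring
lemma dzb2_sub (hf : DifferentiableAt ℝ f p) (hg : DifferentiableAt ℝ g p) :
    dzb2 (fun q => f q - g q) p = dzb2 f p - dzb2 g p := by
  unfold dzb2; rw [fderiv_fun_sub hf hg]; simp; ring

def vL1 (p : ℂ × ℂ) : ℂ × ℂ × ℂ :=
  (3 * p.2 * ((starRingEnd ℂ) p.1) ^ 2,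
   ((Real.sqrt 3 : ℝ) : ℂ) * (p.2 * (starRingEnd ℂ) p.2 - p.1 * (starRingEnd ℂ) p.1),
   -3 * p.1 * ((starRingEnd ℂ) p.2) ^ 2)
def vL2 (p : ℂ × ℂ) : ℂ × ℂ × ℂ :=
  (6 * p.2 ^ 2 * (starRingEnd ℂ) p.1,
   -2 * ((Real.sqrt 3 : ℝ) : ℂ) * (p.1 * p.2),
   6 * p.1 ^ 2 * (starRingEnd ℂ) p.2)
def vL3 (p : ℂ × ℂ) : ℂ × ℂ × ℂ := (6 * p.2 ^ 3, 0, -6 * p.1 ^ 3)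

lemma step1 : LsphV vFaran = vL1 := by
  funext p
  unfold LsphV vL1
  have h1 : (fun q : ℂ × ℂ => (vFaran q).1)
      = fun q => (starRingEnd ℂ) q.1 * (starRingEnd ℂ) q.1 * (starRingEnd ℂ) q.1 := by
    funext q; simp only [vFaran]; try ring
  have h2 : (fun q : ℂ × ℂ => (vFaran q).2.1)
      = fun q => (((Real.sqrt 3 : ℝ) : ℂ) * (starRingEnd ℂ) q.1) * (starRingEnd ℂ) q.2 := by
    funext q; simp only [vFaran]; try ring
  have h3 : (fun q : ℂ × ℂ => (vFaran q).2.2)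
      = fun q => (starRingEnd ℂ) q.2 * (starRingEnd ℂ) q.2 * (starRingEnd ℂ) q.2 := by
    funext q; simp only [vFaran]; try ring
  rw [h1, h2, h3]
  unfold Lsph
  rw [dzb1_mul ((diffAt_c1 p).fun_mul (diffAt_c1 p)) (diffAt_c1 p),
      dzb1_mul (diffAt_c1 p) (diffAt_c1 p),
      dzb2_mul ((diffAt_c1 p).fun_mul (diffAt_c1 p)) (diffAt_c1 p),
      dzb2_mul (diffAt_c1 p) (diffAt_c1 p),
      dzb1_mul ((differentiableAt_const _).fun_mul (diffAt_c1 p)) (diffAt_c2 p),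
      dzb1_mul (differentiableAt_const _) (diffAt_c1 p),
      dzb2_mul ((differentiableAt_const _).fun_mul (diffAt_c1 p)) (diffAt_c2 p),
      dzb2_mul (differentiableAt_const _) (diffAt_c1 p),
      dzb1_mul ((diffAt_c2 p).fun_mul (diffAt_c2 p)) (diffAt_c2 p),
      dzb1_mul (diffAt_c2 p) (diffAt_c2 p),
      dzb2_mul ((diffAt_c2 p).fun_mul (diffAt_c2 p)) (diffAt_c2 p),
      dzb2_mul (diffAt_c2 p) (diffAt_c2 p)]
  simp only [dzb1_c1, dzb1_c2, dzb2_c1, dzb2_c2, dzb1_const, dzb2_const]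
  refine Prod.ext ?_ (Prod.ext ?_ ?_) <;> simp <;> ring

lemma step2 : LsphV vL1 = vL2 := by
  funext p
  unfold LsphV vL2
  have h1 : (fun q : ℂ × ℂ => (vL1 q).1)
      = fun q => ((3 : ℂ) * q.2) * ((starRingEnd ℂ) q.1 * (starRingEnd ℂ) q.1) := by
    funext q; simp only [vL1]; try ring
  have h2 : (fun q : ℂ × ℂ => (vL1 q).2.1)
      = fun q => ((Real.sqrt 3 : ℝ) : ℂ) * (q.2 * (starRingEnd ℂ) q.2 - q.1 * (starRingEnd ℂ) q.1) := by
    funext q; simp only [vL1]; try ring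
  have h3 : (fun q : ℂ × ℂ => (vL1 q).2.2)
      = fun q => ((-3 : ℂ) * q.1) * ((starRingEnd ℂ) q.2 * (starRingEnd ℂ) q.2) := by
    funext q; simp only [vL1]; try ring
  rw [h1, h2, h3]
  unfold Lsph
  rw [dzb1_mul ((differentiableAt_const _).fun_mul (diffAt_z2 p)) ((diffAt_c1 p).fun_mul (diffAt_c1 p)),
      dzb1_mul (differentiableAt_const _) (diffAt_z2 p),
      dzb1_mul (diffAt_c1 p) (diffAt_c1 p),
      dzb2_mul ((differentiableAt_const _).fun_mul (diffAt_z2 p)) ((diffAt_c1 p).fun_mul (diffAt_c1 p)),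
      dzb2_mul (differentiableAt_const _) (diffAt_z2 p),
      dzb2_mul (diffAt_c1 p) (diffAt_c1 p),
      dzb1_mul (differentiableAt_const _)
        (((diffAt_z2 p).fun_mul (diffAt_c2 p)).fun_sub ((diffAt_z1 p).fun_mul (diffAt_c1 p))),
      dzb1_sub ((diffAt_z2 p).fun_mul (diffAt_c2 p)) ((diffAt_z1 p).fun_mul (diffAt_c1 p)),
      dzb1_mul (diffAt_z2 p) (diffAt_c2 p),
      dzb1_mul (diffAt_z1 p) (diffAt_c1 p),
      dzb2_mul (differentiableAt_const _)
        (((diffAt_z2 p).fun_mul (diffAt_c2 p)).fun_sub ((diffAt_z1 p).fun_mul (diffAt_c1 p))),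
      dzb2_sub ((diffAt_z2 p).fun_mul (diffAt_c2 p)) ((diffAt_z1 p).fun_mul (diffAt_c1 p)),
      dzb2_mul (diffAt_z2 p) (diffAt_c2 p),
      dzb2_mul (diffAt_z1 p) (diffAt_c1 p),
      dzb1_mul ((differentiableAt_const _).fun_mul (diffAt_z1 p)) ((diffAt_c2 p).fun_mul (diffAt_c2 p)),
      dzb1_mul (differentiableAt_const _) (diffAt_z1 p),
      dzb1_mul (diffAt_c2 p) (diffAt_c2 p),
      dzb2_mul ((differentiableAt_const _).fun_mul (diffAt_z1 p)) ((diffAt_c2 p).fun_mul (diffAt_c2 p)),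
      dzb2_mul (differentiableAt_const _) (diffAt_z1 p),
      dzb2_mul (diffAt_c2 p) (diffAt_c2 p)]
  simp only [dzb1_c1, dzb1_c2, dzb2_c1, dzb2_c2, dzb1_z1, dzb1_z2, dzb2_z1, dzb2_z2,
      dzb1_const, dzb2_const]
  refine Prod.ext ?_ (Prod.ext ?_ ?_) <;> simp <;> ring

lemma step3 : LsphV vL2 = vL3 := by
  funext p
  unfold LsphV vL3
  have h1 : (fun q : ℂ × ℂ => (vL2 q).1)
      = fun q => ((6 : ℂ) * (q.2 * q.2)) * (starRingEnd ℂ) q.1 := by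
    funext q; simp only [vL2]; try ring
  have h2 : (fun q : ℂ × ℂ => (vL2 q).2.1)
      = fun q => (-2 * ((Real.sqrt 3 : ℝ) : ℂ)) * (q.1 * q.2) := by
    funext q; simp only [vL2]; try ring
  have h3 : (fun q : ℂ × ℂ => (vL2 q).2.2)
      = fun q => ((6 : ℂ) * (q.1 * q.1)) * (starRingEnd ℂ) q.2 := by
    funext q; simp only [vL2]; try ring
  rw [h1, h2, h3]
  unfold Lsph
  rw [dzb1_mul ((differentiableAt_const _).fun_mul ((diffAt_z2 p).fun_mul (diffAt_z2 p))) (diffAt_c1 p),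
      dzb1_mul (differentiableAt_const _) ((diffAt_z2 p).fun_mul (diffAt_z2 p)),
      dzb1_mul (diffAt_z2 p) (diffAt_z2 p),
      dzb2_mul ((differentiableAt_const _).fun_mul ((diffAt_z2 p).fun_mul (diffAt_z2 p))) (diffAt_c1 p),
      dzb2_mul (differentiableAt_const _) ((diffAt_z2 p).fun_mul (diffAt_z2 p)),
      dzb2_mul (diffAt_z2 p) (diffAt_z2 p),
      dzb1_mul (differentiableAt_const _) ((diffAt_z1 p).fun_mul (diffAt_z2 p)),
      dzb1_mul (diffAt_z1 p) (diffAt_z2 p),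
      dzb2_mul (differentiableAt_const _) ((diffAt_z1 p).fun_mul (diffAt_z2 p)),
      dzb2_mul (diffAt_z1 p) (diffAt_z2 p),
      dzb1_mul ((differentiableAt_const _).fun_mul ((diffAt_z1 p).fun_mul (diffAt_z1 p))) (diffAt_c2 p),
      dzb1_mul (differentiableAt_const _) ((diffAt_z1 p).fun_mul (diffAt_z1 p)),
      dzb1_mul (diffAt_z1 p) (diffAt_z1 p),
      dzb2_mul ((differentiableAt_const _).fun_mul ((diffAt_z1 p).fun_mul (diffAt_z1 p))) (diffAt_c2 p),
      dzb2_mul (differentiableAt_const _) ((diffAt_z1 p).fun_mul (diffAt_z1 p)),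
      dzb2_mul (diffAt_z1 p) (diffAt_z1 p)]
  simp only [dzb1_c1, dzb1_c2, dzb2_c1, dzb2_c2, dzb1_z1, dzb1_z2, dzb2_z1, dzb2_z2,
      dzb1_const, dzb2_const]
  refine Prod.ext ?_ (Prod.ext ?_ ?_) <;> simp <;> ring

lemma part1 (p : ℂ × ℂ) (h : Complex.normSq p.1 + Complex.normSq p.2 = 1) :
    rhoSph (Hfaran p) = 0 := by
  unfold rhoSph Hfaran
  simp only [Complex.normSq_mul, map_pow, Complex.normSq_ofReal]
  have h3 : Real.sqrt 3 * Real.sqrt 3 = 3 := Real.mul_self_sqrt (by norm_num)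
  rw [h3]
  linear_combination (Complex.normSq p.1 ^ 2 - Complex.normSq p.1 * Complex.normSq p.2 +
    Complex.normSq p.2 ^ 2 + Complex.normSq p.1 + Complex.normSq p.2 + 1) * h

lemma hasFD_normSq (z : ℂ) : HasFDerivAt Complex.normSq
    ((2 * z.re) • Complex.reCLM + (2 * z.im) • Complex.imCLM) z := by
  have h := ((Complex.reCLM.hasFDerivAt (x := z)).fun_mul (Complex.reCLM.hasFDerivAt)).fun_add
    ((Complex.imCLM.hasFDerivAt (x := z)).fun_mul (Complex.imCLM.hasFDerivAt))
  have e : (Complex.normSq : ℂ → ℝ) = fun w => w.re * w.re + w.im * w.im := by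
    funext w; simp [Complex.normSq_apply]
  rw [e]
  refine h.congr_fderiv ?_
  ext w
  simp
  ring

lemma hasFD_rho (Z : ℂ × ℂ × ℂ) : HasFDerivAt rhoSph
    ((((2 * Z.1.re) • Complex.reCLM + (2 * Z.1.im) • Complex.imCLM).comp
        (ContinuousLinearMap.fst ℝ ℂ (ℂ × ℂ)) +
      ((2 * Z.2.1.re) • Complex.reCLM + (2 * Z.2.1.im) • Complex.imCLM).comp
        ((ContinuousLinearMap.fst ℝ ℂ ℂ).comp (ContinuousLinearMap.snd ℝ ℂ (ℂ × ℂ))) +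
      ((2 * Z.2.2.re) • Complex.reCLM + (2 * Z.2.2.im) • Complex.imCLM).comp
        ((ContinuousLinearMap.snd ℝ ℂ ℂ).comp (ContinuousLinearMap.snd ℝ ℂ (ℂ × ℂ))))) Z := by
  have h1 := (hasFD_normSq Z.1).comp Z (hasFDerivAt_fst (p := Z))
  have h2 := (hasFD_normSq Z.2.1).comp Z ((hasFDerivAt_fst (p := Z.2)).comp Z (hasFDerivAt_snd (p := Z)))
  have h3 := (hasFD_normSq Z.2.2).comp Z ((hasFDerivAt_snd (p := Z.2)).comp Z (hasFDerivAt_snd (p := Z)))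
  exact ((h1.add h2).add h3).sub_const 1

lemma grad_rho (Z : ℂ × ℂ × ℂ) : gradSph rhoSph Z =
    ((starRingEnd ℂ) Z.1, (starRingEnd ℂ) Z.2.1, (starRingEnd ℂ) Z.2.2) := by
  unfold gradSph
  rw [(hasFD_rho Z).fderiv]
  refine Prod.ext ?_ (Prod.ext ?_ ?_) <;>
    simp [Complex.ext_iff]

lemma part2 (p : ℂ × ℂ) : vFaran p = gradSph rhoSph (Hfaran p) := by
  rw [grad_rho]
  simp [vFaran, Hfaran, map_pow, map_mul, Complex.conj_ofReal]

lemma e1 : LsphV^[1] vFaran = vL1 := by rw [Function.iterate_one, step1]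
lemma e2 : LsphV^[2] vFaran = vL2 := by
  rw [show (2:ℕ) = 1 + 1 from rfl, Function.iterate_succ_apply', e1, step2]
lemma e3 : LsphV^[3] vFaran = vL3 := by
  rw [show (3:ℕ) = 2 + 1 from rfl, Function.iterate_succ_apply', e2, step3]

lemma it0 : LsphV^[0] vFaran ((1:ℂ),(0:ℂ)) = ((1:ℂ), (0:ℂ), (0:ℂ)) := by
  simp [vFaran]
lemma it1 : LsphV^[1] vFaran ((1:ℂ),(0:ℂ)) = ((0:ℂ), -((Real.sqrt 3 : ℝ) : ℂ), (0:ℂ)) := by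
  rw [e1]; simp [vL1]
lemma it2 : LsphV^[2] vFaran ((1:ℂ),(0:ℂ)) = ((0:ℂ), (0:ℂ), (0:ℂ)) := by
  rw [e2]; simp [vL2]
lemma it3 : LsphV^[3] vFaran ((1:ℂ),(0:ℂ)) = ((0:ℂ), (0:ℂ), (-6:ℂ)) := by
  rw [e3]; simp [vL3]

lemma sqrt3_ne : ((Real.sqrt 3 : ℝ) : ℂ) ≠ 0 := by
  rw [Complex.ofReal_ne_zero]
  positivity

lemma span3 : Submodule.span ℂ
    {u : ℂ × ℂ × ℂ | ∃ j ≤ 3, u = LsphV^[j] vFaran ((1 : ℂ), (0 : ℂ))} = ⊤ := by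
  rw [eq_top_iff]
  rintro ⟨a, b, c⟩ -
  have h0 : ((1:ℂ), (0:ℂ), (0:ℂ)) ∈ {u : ℂ × ℂ × ℂ | ∃ j ≤ 3, u = LsphV^[j] vFaran ((1 : ℂ), (0 : ℂ))} :=
    ⟨0, by norm_num, it0.symm⟩
  have h1 : ((0:ℂ), -((Real.sqrt 3 : ℝ) : ℂ), (0:ℂ)) ∈ {u : ℂ × ℂ × ℂ | ∃ j ≤ 3, u = LsphV^[j] vFaran ((1 : ℂ), (0 : ℂ))} :=
    ⟨1, by norm_num, it1.symm⟩
  have h3 : ((0:ℂ), (0:ℂ), (-6:ℂ)) ∈ {u : ℂ × ℂ × ℂ | ∃ j ≤ 3, u = LsphV^[j] vFaran ((1 : ℂ), (0 : ℂ))} :=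
    ⟨3, le_refl 3, it3.symm⟩
  have key : ((a, b, c) : ℂ × ℂ × ℂ)
      = a • ((1:ℂ), (0:ℂ), (0:ℂ)) + (-b / ((Real.sqrt 3 : ℝ) : ℂ)) • ((0:ℂ), -((Real.sqrt 3 : ℝ) : ℂ), (0:ℂ))
        + (-c / 6) • ((0:ℂ), (0:ℂ), (-6:ℂ)) := by
    simp [Prod.ext_iff, smul_eq_mul]
  rw [key]
  exact add_mem (add_mem
    (Submodule.smul_mem _ _ (Submodule.subset_span h0))
    (Submodule.smul_mem _ _ (Submodule.subset_span h1)))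
    (Submodule.smul_mem _ _ (Submodule.subset_span h3))

lemma span2 : Submodule.span ℂ
    {u : ℂ × ℂ × ℂ | ∃ j ≤ 2, u = LsphV^[j] vFaran ((1 : ℂ), (0 : ℂ))} ≠ ⊤ := by
  intro htop
  set φ : (ℂ × ℂ × ℂ) →ₗ[ℂ] ℂ := (LinearMap.snd ℂ ℂ ℂ).comp (LinearMap.snd ℂ ℂ (ℂ × ℂ)) with hφ
  have hle : Submodule.span ℂ
      {u : ℂ × ℂ × ℂ | ∃ j ≤ 2, u = LsphV^[j] vFaran ((1 : ℂ), (0 : ℂ))} ≤ LinearMap.ker φ := by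
    rw [Submodule.span_le]
    rintro u ⟨j, hj, rfl⟩
    simp only [SetLike.mem_coe, LinearMap.mem_ker, hφ, LinearMap.comp_apply, LinearMap.snd_apply]
    interval_cases j
    · rw [it0]
    · rw [it1]
    · rw [it2]
  have hmem : ((0:ℂ), (0:ℂ), (1:ℂ)) ∈ LinearMap.ker φ := hle (htop ▸ Submodule.mem_top)
  have : (1 : ℂ) = 0 := by simpa [hφ] using hmem
  exact one_ne_zero this

/-- Example 1.5: the Faran map `H₃(z₁,z₂) = (z₁³, √3 z₁z₂, z₂³)` maps the
unit sphere `M ⊆ ℂ²` into the unit sphere `M' ⊆ ℂ³` and is `3`-nondegenerate at `p = (1,0)`. -/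
theorem faran_third_map_three_nondegenerate :
    -- H₃ maps M into M'
    (∀ p : ℂ × ℂ, Complex.normSq p.1 + Complex.normSq p.2 = 1 → rhoSph (Hfaran p) = 0) ∧
    -- v is indeed the pullback by H₃ of the complex gradient of ρ'
    (∀ p : ℂ × ℂ, vFaran p = gradSph rhoSph (Hfaran p)) ∧
    -- E₃((1,0)) = ℂ³ and E₂((1,0)) ≠ ℂ³
    (Submodule.span ℂ
      {u : ℂ × ℂ × ℂ | ∃ j ≤ 3, u = LsphV^[j] vFaran ((1 : ℂ), (0 : ℂ))} = ⊤) ∧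
    (Submodule.span ℂ
      {u : ℂ × ℂ × ℂ | ∃ j ≤ 2, u = LsphV^[j] vFaran ((1 : ℂ), (0 : ℂ))} ≠ ⊤) := by
  exact ⟨part1, part2, span3, span2⟩
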